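/- Let H be a square-free graph and W = γ₀ γ₁ ⋯ γ_k an nc-walk with k ≥ 1. Let K be the gadget path s v₁ ⋯ v_{k-1} t with pendants u_i pinned to γ_i. Suppose in addition that deg(γ_i) ≡ 1 (mod p) for all i ∈ [k−1]. Then |Hom((K,s,t),(H,γ₁,γ_{k-1}))| ≡ 1 (mod p), where Hom((K,s,t),(H,γ₁,γ_{k-1})) denotes homomorphisms σ : K → H with σ(u_i) = γ_i, σ(s) = γ₁, σ(t) = γ_{k-1}. -/

import Mathlib

namespace Stmt15Aux

variable {V : Type*} [DecidableEq V]

/-- In a square-free graph, two distinct vertices have at most one common neighbour. -/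
lemma sf_unique {H : SimpleGraph V}
    (hsf : ∀ a b c d : V, a ≠ b → b ≠ c → c ≠ d → d ≠ a → a ≠ c → b ≠ d →
      ¬(H.Adj a b ∧ H.Adj b c ∧ H.Adj c d ∧ H.Adj d a))
    {a c x y : V} (hac : a ≠ c)
    (hax : H.Adj a x) (hcx : H.Adj c x) (hay : H.Adj a y) (hcy : H.Adj c y) :
    x = y := by
  by_contra hxy
  exact hsf a x c y hax.ne hcx.ne' hcy.ne hay.ne' hac hxy
    ⟨hax, hcx.symm, hcy, hay.symm⟩

def isHom (H : SimpleGraph V) (k : ℕ) (γ : ℕ → V) (σ : Fin (k + 1) → V) : Prop :=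
  (∀ i : ℕ, (h : i < k) →
    H.Adj (σ ⟨i, Nat.lt_succ_of_lt h⟩) (σ ⟨i + 1, Nat.succ_lt_succ h⟩)) ∧
  (∀ i : ℕ, 1 ≤ i → (h : i + 1 ≤ k) → H.Adj (σ ⟨i, Nat.lt_succ_of_lt h⟩) (γ i)) ∧
  σ 0 = γ 1 ∧ σ ⟨k, Nat.lt_succ_self k⟩ = γ (k - 1)

/-- The canonical map deviating at position `i` with value `w`. -/
def devFun (k : ℕ) (γ : ℕ → V) (i : ℕ) (w : V) : Fin (k + 1) → V :=
  fun j => if (j : ℕ) < i then γ ((j : ℕ) + 1)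
    else if (j : ℕ) = i then w else γ ((j : ℕ) - 1)

lemma devFun_mk (k : ℕ) (γ : ℕ → V) (i : ℕ) (w : V) (m : ℕ) (h : m < k + 1) :
    devFun k γ i w ⟨m, h⟩ =
      if m < i then γ (m + 1) else if m = i then w else γ (m - 1) := rfl

lemma devFun_zero (k : ℕ) (γ : ℕ → V) (i : ℕ) (w : V) (h1 : 1 ≤ i) :
    devFun k γ i w 0 = γ 1 := by
  simp only [devFun, Fin.val_zero]
  exact if_pos (by omega)

section

variable {H : SimpleGraph V} {k : ℕ} {γ : ℕ → V}

/-- One step of the propagation. -/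
lemma step
    (hsf : ∀ a b c d : V, a ≠ b → b ≠ c → c ≠ d → d ≠ a → a ≠ c → b ≠ d →
      ¬(H.Adj a b ∧ H.Adj b c ∧ H.Adj c d ∧ H.Adj d a))
    (hwalk : ∀ i < k, H.Adj (γ i) (γ (i + 1)))
    {σ : Fin (k + 1) → V} (hσ : isHom H k γ σ)
    {j : ℕ} (h1 : 1 ≤ j) (hjk : j < k)
    (hne : σ ⟨j, Nat.lt_succ_of_lt hjk⟩ ≠ γ (j + 1)) :
    σ ⟨j + 1, Nat.succ_lt_succ hjk⟩ = γ j := by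
  obtain ⟨hadj, hpend, h0, hkk⟩ := hσ
  rcases eq_or_lt_of_le (Nat.succ_le_of_lt hjk) with he | hlt
  · -- j + 1 = k
    have e : (⟨j + 1, by omega⟩ : Fin (k + 1)) = ⟨k, by omega⟩ :=
      Fin.ext (by simpa using he)
    rw [e, hkk]
    congr 1
    omega
  · -- j + 1 < k : unique common neighbour of σ j and γ (j+1)
    exact sf_unique hsf hne (hadj j hjk)
      ((hpend (j + 1) (by omega) (by omega)).symm)
      (hpend j h1 (by omega)) ((hwalk j hjk).symm)

/-- Structure theorem. -/
lemma structure_thm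
    (hsf : ∀ a b c d : V, a ≠ b → b ≠ c → c ≠ d → d ≠ a → a ≠ c → b ≠ d →
      ¬(H.Adj a b ∧ H.Adj b c ∧ H.Adj c d ∧ H.Adj d a))
    (hwalk : ∀ i < k, H.Adj (γ i) (γ (i + 1)))
    (hnc : ∀ i, 1 ≤ i → i + 1 ≤ k → γ (i - 1) ≠ γ (i + 1))
    {σ : Fin (k + 1) → V} (hσ : isHom H k γ σ)
    {i : ℕ} (hik : i ≤ k)
    (hstr : ∀ j (hj : j < i), σ ⟨j, by omega⟩ = γ (j + 1))
    (hdev : ∀ h : i < k, σ ⟨i, Nat.lt_succ_of_lt h⟩ ≠ γ (i + 1)) :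
    σ = devFun k γ i (σ ⟨i, by omega⟩) := by
  have h1i : i < k → 1 ≤ i := by
    intro hik'
    by_contra h
    have hi0 : i = 0 := by omega
    apply hdev hik'
    subst hi0
    exact hσ.2.2.1
  have key : ∀ m (_ : i < m) (_ : m ≤ k), σ ⟨m, by omega⟩ = γ (m - 1) := by
    intro m
    induction m with
    | zero => omega
    | succ n ih =>
      intro him hmk
      have hik' : i < k := by omega
      have h1 : 1 ≤ i := h1i hik'
      rcases Nat.lt_or_ge i n with h | h
      · have hn := ih h (by omega)
        have hne : σ ⟨n, by omega⟩ ≠ γ (n + 1) := by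
          rw [hn]
          exact hnc n (by omega) (by omega)
        have := step hsf hwalk hσ (by omega : 1 ≤ n) (by omega) hne
        simpa using this
      · have hin : i = n := by omega
        subst hin
        have := step hsf hwalk hσ h1 (by omega) (hdev (by omega))
        simpa using this
  funext j
  have hj : (j : ℕ) < k + 1 := j.isLt
  have hje : j = (⟨(j : ℕ), hj⟩ : Fin (k + 1)) := Fin.ext rfl
  rw [hje, devFun_mk]
  rcases Nat.lt_trichotomy (j : ℕ) i with h | h | h
  · rw [if_pos h]
    exact hstr (j : ℕ) h
  · rw [if_neg (by omega), if_pos h]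
    exact congrArg σ (Fin.ext h)
  · rw [if_neg (by omega), if_neg (by omega)]
    exact key (j : ℕ) h (by omega)

/-- The straight map is a hom. -/
lemma straight_isHom (hk : 1 ≤ k)
    (hwalk : ∀ i < k, H.Adj (γ i) (γ (i + 1))) :
    isHom H k γ (devFun k γ k (γ (k - 1))) := by
  refine ⟨?_, ?_, ?_, ?_⟩
  · intro m hm
    rw [devFun_mk, devFun_mk, if_pos (by omega)]
    rcases Nat.lt_or_ge (m + 1) k with h | h
    · rw [if_pos h]
      exact hwalk (m + 1) h
    · rw [if_neg (by omega), if_pos (by omega)]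
      have h2 : m + 1 = k - 1 + 1 := by omega
      rw [h2]
      exact (hwalk (k - 1) (by omega)).symm
  · intro m h1 hmk
    rw [devFun_mk, if_pos (by omega)]
    exact (hwalk m (by omega)).symm
  · exact devFun_zero k γ k (γ (k - 1)) hk
  · rw [devFun_mk, if_neg (by omega), if_pos rfl]

/-- A deviation map is a hom. -/
lemma dev_isHom {i : ℕ} (h1 : 1 ≤ i) (hik : i < k)
    (hwalk : ∀ i < k, H.Adj (γ i) (γ (i + 1)))
    {w : V} (hw : H.Adj (γ i) w) :
    isHom H k γ (devFun k γ i w) := by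
  refine ⟨?_, ?_, ?_, ?_⟩
  · intro m hm
    rw [devFun_mk, devFun_mk]
    rcases Nat.lt_trichotomy (m + 1) i with h | h | h
    · rw [if_pos (by omega), if_pos h]
      exact hwalk (m + 1) (by omega)
    · rw [if_pos (by omega), if_neg (by omega), if_pos h]
      rw [show m + 1 = i from h]
      exact hw
    · rcases Nat.lt_or_ge i m with h' | h'
      · rw [if_neg (by omega), if_neg (by omega), if_neg (by omega), if_neg (by omega)]
        have := hwalk (m - 1) (by omega)
        rw [show m - 1 + 1 = m by omega] at this
        simpa [show m + 1 - 1 = m by omega] using this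
      · have him : m = i := by omega
        rw [if_neg (by omega), if_pos him, if_neg (by omega), if_neg (by omega)]
        rw [him, show i + 1 - 1 = i by omega]
        exact hw.symm
  · intro m hm1 hmk
    rw [devFun_mk]
    rcases Nat.lt_trichotomy m i with h | h | h
    · rw [if_pos h]
      exact (hwalk m (by omega)).symm
    · rw [if_neg (by omega), if_pos h]
      rw [h]
      exact hw.symm
    · rw [if_neg (by omega), if_neg (by omega)]
      have := hwalk (m - 1) (by omega)
      rw [show m - 1 + 1 = m by omega] at this
      exact this
  · exact devFun_zero k γ i w h1
  · rw [devFun_mk, if_neg (by omega), if_neg (by omega)]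

end

end Stmt15Aux

open Stmt15Aux in
/-- For the path gadget on an nc-walk `γ₀ … γ_k` in a square-free graph, if
`deg(γ_i) ≡ 1 (mod p)` for all `i ∈ [k-1]`, then the number of homomorphisms with
`σ(s) = γ₁` and `σ(t) = γ_{k-1}` is congruent to 1 modulo `p`. -/
theorem stmt15 {V : Type*} [Fintype V] [DecidableEq V]
    (H : SimpleGraph V) [DecidableRel H.Adj]
    (p : ℕ) (hp : p.Prime)
    (hsf : ∀ a b c d : V, a ≠ b → b ≠ c → c ≠ d → d ≠ a → a ≠ c → b ≠ d →
      ¬(H.Adj a b ∧ H.Adj b c ∧ H.Adj c d ∧ H.Adj d a))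
    (k : ℕ) (hk : 1 ≤ k)
    (γ : ℕ → V)
    (hwalk : ∀ i < k, H.Adj (γ i) (γ (i + 1)))
    (hnc : ∀ i, 1 ≤ i → i + 1 ≤ k → γ (i - 1) ≠ γ (i + 1))
    (hdeg : ∀ i, 1 ≤ i → i + 1 ≤ k → (H.degree (γ i) : ZMod p) = 1) :
    (Set.ncard {σ : Fin (k + 1) → V |
      (∀ i : ℕ, (h : i < k) →
        H.Adj (σ ⟨i, by omega⟩) (σ ⟨i + 1, by omega⟩)) ∧
      (∀ i : ℕ, 1 ≤ i → (h : i + 1 ≤ k) → H.Adj (σ ⟨i, by omega⟩) (γ i)) ∧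
      σ 0 = γ 1 ∧ σ ⟨k, by omega⟩ = γ (k - 1)} : ZMod p) = 1 := by
  classical
  have hSet : {σ : Fin (k + 1) → V |
      (∀ i : ℕ, (h : i < k) →
        H.Adj (σ ⟨i, by omega⟩) (σ ⟨i + 1, by omega⟩)) ∧
      (∀ i : ℕ, 1 ≤ i → (h : i + 1 ≤ k) → H.Adj (σ ⟨i, by omega⟩) (γ i)) ∧
      σ 0 = γ 1 ∧ σ ⟨k, by omega⟩ = γ (k - 1)} = {σ | isHom H k γ σ} := rfl
  rw [hSet]
  set S : Set (Fin (k + 1) → V) := {σ | isHom H k γ σ} with hS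
  -- value of σ at a natural index j (clamped)
  set f : (Fin (k + 1) → V) → ℕ → V :=
    fun σ j => σ ⟨min j k, by omega⟩ with hf
  have hfval : ∀ (σ : Fin (k + 1) → V) (j : ℕ) (hj : j ≤ k),
      f σ j = σ ⟨j, by omega⟩ := by
    intro σ j hj
    simp only [hf]
    congr 1
    exact Fin.ext (by simpa using Nat.min_eq_left hj)
  -- the classification map
  set c : (Fin (k + 1) → V) → ℕ × V := fun σ =>
    if h : ∃ j, j < k ∧ f σ j ≠ γ (j + 1)
    then (Nat.find h, f σ (Nat.find h))
    else (k, γ (k - 1)) with hc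
  -- the target finset
  set T : Finset (ℕ × V) :=
    insert (k, γ (k - 1)) ((Finset.Ico 1 k).biUnion fun i =>
      ((H.neighborFinset (γ i)).erase (γ (i + 1))).image fun w => (i, w)) with hT
  -- every σ ∈ S equals the canonical form determined by c σ
  have hform : ∀ σ ∈ S, σ = devFun k γ (c σ).1 (c σ).2 := by
    intro σ hσ
    simp only [hc]
    split
    case isTrue h =>
      have hspec := Nat.find_spec h
      have hik : Nat.find h ≤ k := le_of_lt hspec.1
      have := structure_thm hsf hwalk hnc hσ hik
        (fun j hj => by
          have h2 := Nat.find_min h hj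
          push_neg at h2
          have h3 := h2 (by omega)
          rw [hfval σ j (by omega)] at h3
          exact h3)
        (fun _ => by
          rw [← hfval σ (Nat.find h) hik]
          exact hspec.2)
      rw [hfval σ (Nat.find h) hik]
      exact this
    case isFalse h =>
      push_neg at h
      have := structure_thm hsf hwalk hnc hσ (le_refl k)
        (fun j hj => by
          have h2 := h j hj
          rw [hfval σ j (by omega)] at h2
          exact h2)
        (fun hkk => absurd hkk (lt_irrefl k))
      rw [hσ.2.2.2] at this
      exact this
  -- classification of the canonical forms
  have hc_straight : c (devFun k γ k (γ (k - 1))) = (k, γ (k - 1)) := by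
    simp only [hc]
    rw [dif_neg]
    push_neg
    intro j hj
    rw [hfval _ j (by omega), devFun_mk, if_pos hj]
  have hc_dev : ∀ (i : ℕ) (w : V), 1 ≤ i → i < k → w ≠ γ (i + 1) →
      c (devFun k γ i w) = (i, w) := by
    intro i w h1 hik hw
    have hdevi : f (devFun k γ i w) i = w := by
      rw [hfval _ i (by omega), devFun_mk, if_neg (by omega), if_pos rfl]
    have hex : ∃ j, j < k ∧ f (devFun k γ i w) j ≠ γ (j + 1) := by
      refine ⟨i, hik, ?_⟩
      rw [hdevi]
      exact hw
    simp only [hc]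
    rw [dif_pos hex]
    have hfind : Nat.find hex = i := by
      rw [Nat.find_eq_iff]
      refine ⟨⟨hik, by rw [hdevi]; exact hw⟩, ?_⟩
      intro j hj
      push_neg
      intro hjk
      rw [hfval _ j (by omega), devFun_mk, if_pos hj]
    rw [hfind, hdevi]
  -- bijectivity
  have hmaps : Set.MapsTo c S (↑T : Set (ℕ × V)) := by
    intro σ hσ
    rw [Set.mem_setOf_eq] at hσ
    rw [Finset.mem_coe, hT]
    simp only [hc]
    split
    case isTrue h =>
      apply Finset.mem_insert_of_mem
      have hspec := Nat.find_spec h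
      have hik : Nat.find h < k := hspec.1
      have h1 : 1 ≤ Nat.find h := by
        by_contra h0
        have h00 : Nat.find h = 0 := by omega
        apply hspec.2
        rw [h00, hfval σ 0 (by omega)]
        have h01 := hσ.2.2.1
        have : (⟨0, by omega⟩ : Fin (k + 1)) = 0 := rfl
        rw [this, h01]
      rw [Finset.mem_biUnion]
      refine ⟨Nat.find h, by rw [Finset.mem_Ico]; omega, ?_⟩
      rw [Finset.mem_image]
      refine ⟨f σ (Nat.find h), ?_, rfl⟩
      rw [Finset.mem_erase]
      refine ⟨hspec.2, ?_⟩
      rw [SimpleGraph.mem_neighborFinset, hfval σ (Nat.find h) (by omega)]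
      exact (hσ.2.1 (Nat.find h) h1 (by omega)).symm
    case isFalse h =>
      exact Finset.mem_insert_self _ _
  have hinj : Set.InjOn c S := by
    intro σ hσ τ hτ hcst
    rw [hform σ hσ, hform τ hτ, hcst]
  have hsurj : Set.SurjOn c S (↑T : Set (ℕ × V)) := by
    intro t ht
    rw [Finset.mem_coe, hT, Finset.mem_insert] at ht
    rcases ht with rfl | hmem
    · exact ⟨devFun k γ k (γ (k - 1)), straight_isHom hk hwalk, hc_straight⟩
    · rw [Finset.mem_biUnion] at hmem
      obtain ⟨i, hi, hmem⟩ := hmem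
      rw [Finset.mem_image] at hmem
      obtain ⟨w, hw, rfl⟩ := hmem
      rw [Finset.mem_erase, SimpleGraph.mem_neighborFinset] at hw
      rw [Finset.mem_Ico] at hi
      exact ⟨devFun k γ i w, dev_isHom hi.1 hi.2 hwalk hw.2,
        hc_dev i w hi.1 hi.2 hw.1⟩
  -- hence the cardinalities agree
  have himg : c '' S = ↑T := Set.BijOn.image_eq ⟨hmaps, hinj, hsurj⟩
  have hcard : S.ncard = T.card := by
    rw [← Set.ncard_image_of_injOn hinj, himg, Set.ncard_coe_finset]
  rw [hcard]
  -- compute T.card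
  have hnotmem : (k, γ (k - 1)) ∉ (Finset.Ico 1 k).biUnion (fun i =>
      ((H.neighborFinset (γ i)).erase (γ (i + 1))).image fun w => (i, w)) := by
    simp only [Finset.mem_biUnion, Finset.mem_image, Finset.mem_Ico, not_exists]
    rintro i ⟨⟨hi1, hi2⟩, w, _, he⟩
    have : i = k := ((Prod.mk.injEq _ _ _ _).mp he).1
    omega
  have hdisj : ∀ x ∈ Finset.Ico 1 k, ∀ y ∈ Finset.Ico 1 k, x ≠ y →
      Disjoint (((H.neighborFinset (γ x)).erase (γ (x + 1))).image fun w => (x, w))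
        (((H.neighborFinset (γ y)).erase (γ (y + 1))).image fun w => (y, w)) := by
    intro x _ y _ hxy
    rw [Finset.disjoint_left]
    simp only [Finset.mem_image]
    rintro a ⟨w, _, rfl⟩ ⟨w', _, he⟩
    exact hxy ((Prod.mk.injEq _ _ _ _).mp he.symm).1
  have hTcard : T.card = 1 + ∑ i ∈ Finset.Ico 1 k, (H.degree (γ i) - 1) := by
    rw [hT, Finset.card_insert_of_notMem hnotmem, Finset.card_biUnion hdisj]
    rw [add_comm]
    congr 1
    apply Finset.sum_congr rfl
    intro i hi
    rw [Finset.mem_Ico] at hi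
    rw [Finset.card_image_of_injective _ (fun a b hab =>
      ((Prod.mk.injEq _ _ _ _).mp hab).2)]
    rw [Finset.card_erase_of_mem]
    · rfl
    · rw [SimpleGraph.mem_neighborFinset]
      exact hwalk i hi.2
  rw [hTcard]
  push_cast
  rw [Finset.sum_congr rfl (fun i hi => ?_), Finset.sum_const_zero]
  · ring
  · rw [Finset.mem_Ico] at hi
    have hd1 : 1 ≤ H.degree (γ i) := by
      rw [← SimpleGraph.card_neighborFinset_eq_degree]
      exact Finset.card_pos.mpr ⟨γ (i + 1), by
        rw [SimpleGraph.mem_neighborFinset]; exact hwalk i hi.2⟩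
    rw [Nat.cast_sub hd1, hdeg i hi.1 (by omega)]
    ring
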